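/- Let n ≥ 3. For ξ ∈ ℝⁿ, define the linear map 𝕃(ξ): ℝⁿ → Symₙ(ℝ) by 𝕃(ξ)a = a⊙ξ − Iₙ (a·ξ)/n (the principal symbol of the deviatoric operator). Then for any three pairwise linearly independent vectors ξ, η, ω ∈ ℝⁿ, the intersection of the images im 𝕃(ξ) ∩ im 𝕃(η) ∩ im 𝕃(ω) = {0}. -/

import Mathlib

open Matrix

/-- The principal symbol of the deviatoric operator:
`𝕃(ξ)a = a⊙ξ − Iₙ (a·ξ)/n`, where `a⊙ξ = ½(a⊗ξ + ξ⊗a)`. -/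
noncomputable def devSymbol (n : ℕ) (ξ : Fin n → ℝ) (a : Fin n → ℝ) :
    Matrix (Fin n) (Fin n) ℝ :=
  (2 : ℝ)⁻¹ • (Matrix.vecMulVec a ξ + Matrix.vecMulVec ξ a) -
    (dotProduct a ξ / (n : ℝ)) • (1 : Matrix (Fin n) (Fin n) ℝ)

lemma vmvmv (n : ℕ) (a ξ v : Fin n → ℝ) : vecMulVec a ξ *ᵥ v = (ξ ⬝ᵥ v) • a := by
  funext i
  simp only [vecMulVec_apply, mulVec, dotProduct, Pi.smul_apply, smul_eq_mul,
    Finset.sum_mul, Finset.mul_sum]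
  exact Finset.sum_congr rfl (fun x _ => by ring)

lemma dev_bilin (n : ℕ) (ξ a u v : Fin n → ℝ) :
    u ⬝ᵥ (devSymbol n ξ a *ᵥ v) =
      (2 : ℝ)⁻¹ * ((a ⬝ᵥ u) * (ξ ⬝ᵥ v) + (ξ ⬝ᵥ u) * (a ⬝ᵥ v))
        - (a ⬝ᵥ ξ) / n * (u ⬝ᵥ v) := by
  simp [devSymbol, sub_mulVec, add_mulVec, smul_mulVec, vmvmv, dotProduct_smul,
    dotProduct_sub, dotProduct_add, smul_eq_mul]
  rw [dotProduct_comm u a, dotProduct_comm u ξ]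
  ring

lemma dev_zero (n : ℕ) (ξ : Fin n → ℝ) : devSymbol n ξ 0 = 0 := by
  ext i j
  simp [devSymbol, vecMulVec_apply]

lemma li_swap {M : Type*} [AddCommGroup M] [Module ℝ M] {x y : M}
    (h : LinearIndependent ℝ ![x, y]) : LinearIndependent ℝ ![y, x] := by
  rw [LinearIndependent.pair_iff] at h ⊢
  intro s t hst
  obtain ⟨h1, h2⟩ := h t s (by rw [add_comm]; exact hst)
  exact ⟨h2, h1⟩

/-- nonzero vector orthogonal to two given vectors, when n ≥ 3 -/
lemma exists_perp (n : ℕ) (hn : 3 ≤ n) (ξ η : Fin n → ℝ) :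
    ∃ v : Fin n → ℝ, v ≠ 0 ∧ ξ ⬝ᵥ v = 0 ∧ η ⬝ᵥ v = 0 := by
  let L : (Fin n → ℝ) →ₗ[ℝ] ℝ × ℝ :=
    { toFun := fun v => (ξ ⬝ᵥ v, η ⬝ᵥ v)
      map_add' := fun x y => by simp [dotProduct_add, Prod.ext_iff]
      map_smul' := fun c x => by simp [dotProduct_smul, Prod.ext_iff] }
  have hker : LinearMap.ker L ≠ ⊥ := by
    intro hbot
    have h1 := LinearMap.finrank_range_add_finrank_ker L
    have h2 : Module.finrank ℝ (LinearMap.range L) ≤ 2 := by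
      have := Submodule.finrank_le (LinearMap.range L)
      simpa using this
    rw [hbot] at h1
    simp [Module.finrank_fintype_fun_eq_card] at h1
    omega
  obtain ⟨v, hv, hv0⟩ := Submodule.exists_mem_ne_zero_of_ne_bot hker
  refine ⟨v, hv0, ?_, ?_⟩
  · exact congrArg Prod.fst (LinearMap.mem_ker.mp hv)
  · exact congrArg Prod.snd (LinearMap.mem_ker.mp hv)

/-- dual vector: for linearly independent ξ, η, a vector u with ξ·u = 1, η·u = 0 -/
lemma exists_dual (n : ℕ) (ξ η : Fin n → ℝ) (h : LinearIndependent ℝ ![ξ, η]) :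
    ∃ u : Fin n → ℝ, ξ ⬝ᵥ u = 1 ∧ η ⬝ᵥ u = 0 := by
  set D : ℝ := (ξ ⬝ᵥ ξ) * (η ⬝ᵥ η) - (ξ ⬝ᵥ η) * (ξ ⬝ᵥ η) with hD
  have hDne : D ≠ 0 := by
    intro hD0
    set u : Fin n → ℝ := (η ⬝ᵥ η) • ξ - (ξ ⬝ᵥ η) • η with hu
    have hxu : ξ ⬝ᵥ u = 0 := by
      simp [hu, dotProduct_sub, dotProduct_smul, smul_eq_mul]
      rw [hD] at hD0
      linear_combination hD0
    have hyu : η ⬝ᵥ u = 0 := by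
      simp [hu, dotProduct_sub, dotProduct_smul, smul_eq_mul]
      rw [dotProduct_comm η ξ, dotProduct_comm ξ η]
      ring
    have huu : u ⬝ᵥ u = 0 := by
      have h1 := congrArg (fun w => w ⬝ᵥ u) hu
      simp only [sub_dotProduct, smul_dotProduct, smul_eq_mul, hxu, hyu] at h1
      simpa using h1
    have hu0 : u = 0 := dotProduct_self_eq_zero.mp huu
    rw [hu] at hu0
    have := (LinearIndependent.pair_iff.mp h) (η ⬝ᵥ η) (-(ξ ⬝ᵥ η)) (by
      rw [neg_smul, ← sub_eq_add_neg]; exact hu0)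
    have hη : η ⬝ᵥ η = 0 := this.1
    have hη0 : η = 0 := dotProduct_self_eq_zero.mp hη
    have := (LinearIndependent.pair_iff.mp h) 0 1 (by simp [hη0])
    exact one_ne_zero this.2
  refine ⟨D⁻¹ • ((η ⬝ᵥ η) • ξ - (ξ ⬝ᵥ η) • η), ?_, ?_⟩
  · rw [dotProduct_smul, dotProduct_sub, dotProduct_smul, dotProduct_smul]
    simp only [smul_eq_mul]
    convert inv_mul_cancel₀ hDne using 2
    rw [hD]; ring
  · rw [dotProduct_smul, dotProduct_sub, dotProduct_smul, dotProduct_smul]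
    rw [dotProduct_comm η ξ]
    simp only [smul_eq_mul]
    ring

/-- if two deviatoric symbols agree and there is a common perpendicular direction,
their trace parts agree -/
lemma trace_eq (n : ℕ) (hn : 3 ≤ n) (ξ η a b : Fin n → ℝ)
    (h : devSymbol n ξ a = devSymbol n η b) :
    (a ⬝ᵥ ξ) / n = (b ⬝ᵥ η) / n := by
  obtain ⟨v, hv0, hξv, hηv⟩ := exists_perp n hn ξ η
  have e := congrArg (fun M => v ⬝ᵥ (M *ᵥ v)) h
  simp only [dev_bilin] at e
  rw [hξv, hηv] at e
  have hvv : v ⬝ᵥ v ≠ 0 := fun h0 => hv0 (dotProduct_self_eq_zero.mp h0)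
  have : ((a ⬝ᵥ ξ) / n - (b ⬝ᵥ η) / n) * (v ⬝ᵥ v) = 0 := by linear_combination -e
  rcases mul_eq_zero.mp this with h' | h'
  · linarith
  · exact absurd h' hvv

/-- the key bilinear identity when the two symbols agree -/
lemma bilin_eq (n : ℕ) (hn : 3 ≤ n) (ξ η a b : Fin n → ℝ)
    (h : devSymbol n ξ a = devSymbol n η b) (u v : Fin n → ℝ) :
    (a ⬝ᵥ u) * (ξ ⬝ᵥ v) + (ξ ⬝ᵥ u) * (a ⬝ᵥ v)
      = (b ⬝ᵥ u) * (η ⬝ᵥ v) + (η ⬝ᵥ u) * (b ⬝ᵥ v) := by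
  have ht := trace_eq n hn ξ η a b h
  have e := congrArg (fun M => u ⬝ᵥ (M *ᵥ v)) h
  simp only [dev_bilin] at e
  linear_combination 2 * e + 2 * (u ⬝ᵥ v) * ht

/-- from equality of symbols with independent directions: `a` is proportional to `η` -/
lemma prop_lemma (n : ℕ) (hn : 3 ≤ n) (ξ η a b : Fin n → ℝ)
    (hli : LinearIndependent ℝ ![ξ, η])
    (h : devSymbol n ξ a = devSymbol n η b) :
    ∃ β : ℝ, (∀ v, a ⬝ᵥ v = β * (η ⬝ᵥ v)) ∧ (∀ v, b ⬝ᵥ v = β * (ξ ⬝ᵥ v)) := by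
  obtain ⟨u₁, hu1, hu2⟩ := exists_dual n ξ η hli
  obtain ⟨w₁, hw1, hw2⟩ := exists_dual n η ξ (li_swap hli)
  have hau : a ⬝ᵥ u₁ = 0 := by
    have e := bilin_eq n hn ξ η a b h u₁ u₁
    rw [hu1, hu2] at e; linarith
  have hbw : b ⬝ᵥ w₁ = 0 := by
    have e := bilin_eq n hn ξ η a b h w₁ w₁
    rw [hw1, hw2] at e; linarith
  have hA : ∀ v, a ⬝ᵥ v = (b ⬝ᵥ u₁) * (η ⬝ᵥ v) := by
    intro v
    have e := bilin_eq n hn ξ η a b h u₁ v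
    rw [hu1, hu2, hau] at e; linarith
  have hB : ∀ v, b ⬝ᵥ v = (a ⬝ᵥ w₁) * (ξ ⬝ᵥ v) := by
    intro v
    have e := bilin_eq n hn ξ η a b h w₁ v
    rw [hw1, hw2, hbw] at e; linarith
  have hβ : b ⬝ᵥ u₁ = a ⬝ᵥ w₁ := by
    have := hB u₁; rw [hu1] at this; simpa using this
  exact ⟨a ⬝ᵥ w₁, fun v => by rw [hA v, hβ], hB⟩

/-- For `n ≥ 3` and pairwise linearly independent `ξ, η, ω`,
`im 𝕃(ξ) ∩ im 𝕃(η) ∩ im 𝕃(ω) = {0}`. -/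
theorem stmt2 (n : ℕ) (hn : 3 ≤ n) (ξ η ω : Fin n → ℝ)
    (h1 : LinearIndependent ℝ ![ξ, η]) (h2 : LinearIndependent ℝ ![η, ω])
    (h3 : LinearIndependent ℝ ![ξ, ω]) :
    Set.range (devSymbol n ξ) ∩ Set.range (devSymbol n η) ∩ Set.range (devSymbol n ω)
      = {0} := by
  ext M
  simp only [Set.mem_inter_iff, Set.mem_range, Set.mem_singleton_iff]
  constructor
  · rintro ⟨⟨⟨a, ha⟩, ⟨b, hb⟩⟩, ⟨c, hc⟩⟩
    obtain ⟨β, hAa, hAb⟩ := prop_lemma n hn ξ η a b h1 (ha.trans hb.symm)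
    obtain ⟨ν, hBb, hBc⟩ := prop_lemma n hn η ω b c h2 (hb.trans hc.symm)
    -- b ⬝ᵥ v = β (ξ ⬝ᵥ v) = ν (ω ⬝ᵥ v) for all v
    have hkey : ∀ v, (β • ξ - ν • ω) ⬝ᵥ v = 0 := by
      intro v
      have e1 := hAb v
      have e2 := hBb v
      simp only [sub_dotProduct, smul_dotProduct, smul_eq_mul]
      linarith
    have hzero : β • ξ - ν • ω = 0 := by
      have := hkey (β • ξ - ν • ω)
      rw [dotProduct_comm] at this
      exact dotProduct_self_eq_zero.mp this
    have hβν := (LinearIndependent.pair_iff.mp h3) β (-ν) (by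
      rw [neg_smul, ← sub_eq_add_neg]; exact hzero)
    have hβ0 : β = 0 := hβν.1
    have ha0 : a = 0 := by
      apply dotProduct_self_eq_zero.mp
      rw [hAa a, hβ0, zero_mul]
    rw [← ha, ha0, dev_zero]
  · rintro rfl
    exact ⟨⟨⟨0, dev_zero n ξ⟩, ⟨0, dev_zero n η⟩⟩, ⟨0, dev_zero n ω⟩⟩
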